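/- Assume α ∈ W^{2,∞}(D) with α ≥ α_min > 0. Then for every f ∈ X(D), the function Tf satisfies Δ²(Tf) ∈ L²(D) with the estimate ‖Δ²(Tf)‖_{L²(D)} ≤ C‖f‖_{L²(D)} for a constant C independent of f. -/

import Mathlib

open MeasureTheory Set

/-- The Laplacian of a function on Euclidean space. -/
noncomputable def lap {d : ℕ} (f : EuclideanSpace ℝ (Fin d) → ℝ)
    (x : EuclideanSpace ℝ (Fin d)) : ℝ :=
  ∑ i : Fin d, iteratedFDeriv ℝ 2 f x ![EuclideanSpace.single i (1 : ℝ), EuclideanSpace.single i (1 : ℝ)]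

noncomputable section
namespace BilapAux

variable {d : ℕ}

/-- partial derivative in direction `i`. -/
def pd (i : Fin d) (f : EuclideanSpace ℝ (Fin d) → ℝ) (x : EuclideanSpace ℝ (Fin d)) : ℝ :=
  fderiv ℝ f x (EuclideanSpace.single i (1:ℝ))

lemma contDiff_pd {k : ℕ} {f : EuclideanSpace ℝ (Fin d) → ℝ}
    (hf : ContDiff ℝ (k+1) f) (i : Fin d) : ContDiff ℝ k (pd i f) := by
  have h1 : ContDiff ℝ k (fderiv ℝ f) := hf.fderiv_right (by norm_cast)
  exact h1.clm_apply contDiff_const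

lemma pd_pd_eq {f : EuclideanSpace ℝ (Fin d) → ℝ} (hf : ContDiff ℝ 2 f)
    (i : Fin d) (x : EuclideanSpace ℝ (Fin d)) :
    pd i (pd i f) x = iteratedFDeriv ℝ 2 f x
      ![EuclideanSpace.single i (1:ℝ), EuclideanSpace.single i (1:ℝ)] := by
  rw [iteratedFDeriv_two_apply]
  have hdf : DifferentiableAt ℝ (fderiv ℝ f) x := by
    have : ContDiff ℝ 1 (fderiv ℝ f) := hf.fderiv_right (by norm_num)
    exact (this.differentiable (by simp)).differentiableAt
  have : fderiv ℝ (pd i f) x = (fderiv ℝ (fderiv ℝ f) x).flip (EuclideanSpace.single i (1:ℝ)) := by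
    have h := fderiv_clm_apply (c := fderiv ℝ f) (u := fun _ => EuclideanSpace.single i (1:ℝ))
      hdf (differentiableAt_const _)
    simp only [fderiv_fun_const, Pi.zero_apply, ContinuousLinearMap.comp_zero, zero_add] at h
    exact h
  simp only [pd, this, ContinuousLinearMap.flip_apply]
  simp [Matrix.cons_val_zero, Matrix.cons_val_one]

lemma lap_eq {f : EuclideanSpace ℝ (Fin d) → ℝ} (hf : ContDiff ℝ 2 f)
    (x : EuclideanSpace ℝ (Fin d)) :
    lap f x = ∑ i : Fin d, pd i (pd i f) x := by
  unfold lap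
  exact Finset.sum_congr rfl fun i _ => (pd_pd_eq hf i x).symm

lemma pd_mul {g h : EuclideanSpace ℝ (Fin d) → ℝ} (hg : Differentiable ℝ g)
    (hh : Differentiable ℝ h) (i : Fin d) (x : EuclideanSpace ℝ (Fin d)) :
    pd i (fun y => g y * h y) x = g x * pd i h x + h x * pd i g x := by
  unfold pd
  rw [fderiv_fun_mul (hg.differentiableAt) (hh.differentiableAt)]
  simp only [ContinuousLinearMap.add_apply, ContinuousLinearMap.smul_apply, smul_eq_mul]


lemma pd_add {F G : EuclideanSpace ℝ (Fin d) → ℝ} {x : EuclideanSpace ℝ (Fin d)} (i : Fin d)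
    (hF : DifferentiableAt ℝ F x) (hG : DifferentiableAt ℝ G x) :
    pd i (fun y => F y + G y) x = pd i F x + pd i G x := by
  unfold pd
  rw [fderiv_fun_add hF hG]
  simp

lemma lap_mul {g v : EuclideanSpace ℝ (Fin d) → ℝ} (hg : ContDiff ℝ 2 g) (hv : ContDiff ℝ 2 v)
    (x : EuclideanSpace ℝ (Fin d)) :
    lap (fun y => g y * v y) x
      = g x * lap v x + 2 * ∑ i : Fin d, pd i g x * pd i v x + v x * lap g x := by
  have hg1 : ContDiff ℝ ((1:ℕ)+1) g := by exact_mod_cast hg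
  have hv1 : ContDiff ℝ ((1:ℕ)+1) v := by exact_mod_cast hv
  have hgd : Differentiable ℝ g := hg.differentiable (by norm_num)
  have hvd : Differentiable ℝ v := hv.differentiable (by norm_num)
  rw [lap_eq (hg.mul hv), lap_eq hg, lap_eq hv]
  have key : ∀ i : Fin d, pd i (pd i fun y => g y * v y) x
      = (g x * pd i (pd i v) x + v x * pd i (pd i g) x) + 2*(pd i g x * pd i v x) := by
    intro i
    have e1 : (pd i fun y => g y * v y) = fun y => g y * pd i v y + v y * pd i g y :=
      funext fun y => pd_mul hgd hvd i y
    rw [e1, pd_add i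
        ((hgd x).fun_mul ((contDiff_pd hv1 i).differentiable (by simp)).differentiableAt)
        ((hvd x).fun_mul ((contDiff_pd hg1 i).differentiable (by simp)).differentiableAt),
      pd_mul hgd ((contDiff_pd hv1 i).differentiable (by simp)) i x,
      pd_mul hvd ((contDiff_pd hg1 i).differentiable (by simp)) i x]
    ring
  rw [Finset.sum_congr rfl (fun i _ => key i), Finset.sum_add_distrib,
    ← Finset.mul_sum]
  rw [Finset.sum_add_distrib, ← Finset.mul_sum, ← Finset.mul_sum]
  ring

lemma abs_pd_le {f : EuclideanSpace ℝ (Fin d) → ℝ} {x : EuclideanSpace ℝ (Fin d)} {M : ℝ}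
    (hM : ‖iteratedFDeriv ℝ 1 f x‖ ≤ M) (i : Fin d) : |pd i f x| ≤ M := by
  have h1 : pd i f x = iteratedFDeriv ℝ 1 f x ![EuclideanSpace.single i (1:ℝ)] := by
    rw [iteratedFDeriv_one_apply]
    simp [pd]
  rw [h1, ← Real.norm_eq_abs]
  calc ‖iteratedFDeriv ℝ 1 f x ![EuclideanSpace.single i (1:ℝ)]‖
      ≤ ‖iteratedFDeriv ℝ 1 f x‖ * ∏ j : Fin 1, ‖(![EuclideanSpace.single i (1:ℝ)]) j‖ :=
        (iteratedFDeriv ℝ 1 f x).le_opNorm _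
    _ ≤ M := by
        simp [EuclideanSpace.norm_single]
        simpa using hM

lemma abs_pd_pd_le {f : EuclideanSpace ℝ (Fin d) → ℝ} {x : EuclideanSpace ℝ (Fin d)} {M : ℝ}
    (hf : ContDiff ℝ 2 f) (hM : ‖iteratedFDeriv ℝ 2 f x‖ ≤ M) (i : Fin d) :
    |pd i (pd i f) x| ≤ M := by
  rw [pd_pd_eq hf i x, ← Real.norm_eq_abs]
  calc ‖iteratedFDeriv ℝ 2 f x ![EuclideanSpace.single i (1:ℝ), EuclideanSpace.single i (1:ℝ)]‖
      ≤ ‖iteratedFDeriv ℝ 2 f x‖ *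
          ∏ j : Fin 2, ‖(![EuclideanSpace.single i (1:ℝ), EuclideanSpace.single i (1:ℝ)]) j‖ :=
        (iteratedFDeriv ℝ 2 f x).le_opNorm _
    _ ≤ M := by
        simp [EuclideanSpace.norm_single, Fin.prod_univ_two]
        exact hM

lemma abs_lap_le {f : EuclideanSpace ℝ (Fin d) → ℝ} {x : EuclideanSpace ℝ (Fin d)} {M : ℝ}
    (hM : ‖iteratedFDeriv ℝ 2 f x‖ ≤ M) : |lap f x| ≤ d * M := by
  calc |lap f x| ≤ ∑ i : Fin d, |iteratedFDeriv ℝ 2 f x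
        ![EuclideanSpace.single i (1:ℝ), EuclideanSpace.single i (1:ℝ)]| :=
        Finset.abs_sum_le_sum_abs _ _
    _ ≤ ∑ _i : Fin d, M := by
        refine Finset.sum_le_sum fun i _ => ?_
        rw [← Real.norm_eq_abs]
        calc ‖iteratedFDeriv ℝ 2 f x ![EuclideanSpace.single i (1:ℝ), EuclideanSpace.single i (1:ℝ)]‖
            ≤ ‖iteratedFDeriv ℝ 2 f x‖ *
              ∏ j : Fin 2, ‖(![EuclideanSpace.single i (1:ℝ), EuclideanSpace.single i (1:ℝ)]) j‖ :=
              (iteratedFDeriv ℝ 2 f x).le_opNorm _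
          _ ≤ M := by
              simp [EuclideanSpace.norm_single, Fin.prod_univ_two]
              exact hM
    _ = d * M := by simp [Finset.sum_const, nsmul_eq_mul]


lemma abs_coord_le_norm {d : ℕ} (x : EuclideanSpace ℝ (Fin d)) (j : Fin d) : |x j| ≤ ‖x‖ := by
  rw [EuclideanSpace.norm_eq]
  have h1 : |x j| = Real.sqrt (‖x j‖ ^ 2) := by
    rw [Real.sqrt_sq_eq_abs, Real.norm_eq_abs, abs_abs]
  rw [h1]
  apply Real.sqrt_le_sqrt
  exact Finset.single_le_sum (f := fun k => ‖x k‖^2) (fun k _ => sq_nonneg _) (Finset.mem_univ j)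



lemma integral_deriv_eq_zero_1d {S : Set ℝ} (hS : IsOpen S) (hSb : Bornology.IsBounded S)
    {h : ℝ → ℝ} (hh : ContDiff ℝ 1 h) (hfr : ∀ t ∈ frontier S, h t = 0) :
    ∫ t in S, deriv h t = 0 := by
  rcases S.eq_empty_or_nonempty with rfl | _
  · simp
  obtain ⟨r, hr⟩ := hSb.subset_closedBall 0
  rw [Real.closedBall_eq_Icc, zero_sub, zero_add] at hr
  set A : ℝ → ℝ := fun s => sSup {t | t < s ∧ t ∉ S} with hA
  set B : ℝ → ℝ := fun s => sInf {t | s < t ∧ t ∉ S} with hB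
  have hmem : ∀ s ∈ S, -r ≤ s ∧ s ≤ r := fun s hs => (hr hs).imp id id
  have hAne : ∀ s ∈ S, {t | t < s ∧ t ∉ S}.Nonempty := by
    intro s hs
    refine ⟨-(r+1), ?_, fun hmem' => ?_⟩
    · linarith [(hmem s hs).1]
    · linarith [(hmem _ hmem').1]
  have hBne : ∀ s ∈ S, {t | s < t ∧ t ∉ S}.Nonempty := by
    intro s hs
    refine ⟨r+1, ?_, fun hmem' => ?_⟩
    · linarith [(hmem s hs).2]
    · linarith [(hmem _ hmem').2]
  have hAbdd : ∀ s : ℝ, BddAbove {t | t < s ∧ t ∉ S} := fun s =>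
    ⟨s, fun t ht => le_of_lt ht.1⟩
  have hBbdd : ∀ s : ℝ, BddBelow {t | s < t ∧ t ∉ S} := fun s =>
    ⟨s, fun t ht => le_of_lt ht.1⟩
  have hAlt : ∀ s ∈ S, A s < s := by
    intro s hs
    obtain ⟨ε, hε, hball⟩ := Metric.isOpen_iff.1 hS s hs
    have : A s ≤ s - ε/2 := by
      apply csSup_le (hAne s hs)
      intro t ht
      by_contra hlt
      push_neg at hlt
      exact ht.2 (hball (by rw [Real.ball_eq_Ioo]; exact ⟨by linarith, by linarith [ht.1]⟩))
    linarith
  have hBgt : ∀ s ∈ S, s < B s := by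
    intro s hs
    obtain ⟨ε, hε, hball⟩ := Metric.isOpen_iff.1 hS s hs
    have : s + ε/2 ≤ B s := by
      apply le_csInf (hBne s hs)
      intro t ht
      by_contra hlt
      push_neg at hlt
      exact ht.2 (hball (by rw [Real.ball_eq_Ioo]; exact ⟨by linarith [ht.1], by linarith⟩))
    linarith
  have hsub : ∀ s ∈ S, Ioo (A s) (B s) ⊆ S := by
    intro s hs t ht
    by_contra htS
    rcases lt_trichotomy t s with hlt | rfl | hgt
    · exact absurd (le_csSup (hAbdd s) ⟨hlt, htS⟩) (not_le.2 ht.1)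
    · exact htS hs
    · exact absurd (csInf_le (hBbdd s) ⟨hgt, htS⟩) (not_le.2 ht.2)
  have hAfr : ∀ s ∈ S, A s ∈ frontier S := by
    intro s hs
    rw [frontier_eq_closure_inter_closure]
    constructor
    · have h1 : A s ∈ closure (Ioo (A s) s) := by
        rw [closure_Ioo (ne_of_lt (hAlt s hs))]
        exact ⟨le_rfl, le_of_lt (hAlt s hs)⟩
      refine closure_mono (fun t ht => hsub s hs ⟨ht.1, lt_trans ht.2 (hBgt s hs)⟩) h1
    · exact closure_mono (fun t ht => ht.2) (csSup_mem_closure (hAne s hs) (hAbdd s))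
  have hBfr : ∀ s ∈ S, B s ∈ frontier S := by
    intro s hs
    rw [frontier_eq_closure_inter_closure]
    constructor
    · have h1 : B s ∈ closure (Ioo s (B s)) := by
        rw [closure_Ioo (ne_of_lt (hBgt s hs))]
        exact ⟨le_of_lt (hBgt s hs), le_rfl⟩
      refine closure_mono (fun t ht => hsub s hs ⟨lt_trans (hAlt s hs) ht.1, ht.2⟩) h1
    · exact closure_mono (fun t ht => ht.2) (csInf_mem_closure (hBne s hs) (hBbdd s))
  have hfrS : ∀ t ∈ frontier S, t ∉ S := by
    intro t ht
    rw [hS.frontier_eq] at ht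
    exact ht.2
  have hcomp : ∀ s ∈ S, ∀ s' ∈ Ioo (A s) (B s), A s' = A s ∧ B s' = B s := by
    intro s hs s' hs'
    constructor
    · apply le_antisymm
      · apply csSup_le (hAne s' (hsub s hs hs'))
        intro t ht
        by_contra hlt
        push_neg at hlt
        exact ht.2 (hsub s hs ⟨hlt, lt_trans ht.1 hs'.2⟩)
      · exact le_csSup (hAbdd s') ⟨hs'.1, hfrS _ (hAfr s hs)⟩
    · apply le_antisymm
      · exact csInf_le (hBbdd s') ⟨hs'.2, hfrS _ (hBfr s hs)⟩
      · apply le_csInf (hBne s' (hsub s hs hs'))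
        intro t ht
        by_contra hlt
        push_neg at hlt
        exact ht.2 (hsub s hs ⟨lt_trans hs'.1 ht.1, hlt⟩)
  -- integral over each component is zero
  have hFTC : ∀ s ∈ S, ∫ t in Ioo (A s) (B s), deriv h t = 0 := by
    intro s hs
    have hle : A s ≤ B s := le_of_lt (lt_trans (hAlt s hs) (hBgt s hs))
    rw [← integral_Ioc_eq_integral_Ioo, ← intervalIntegral.integral_of_le hle]
    rw [intervalIntegral.integral_deriv_eq_sub
      (fun x _ => (hh.differentiable (by simp)).differentiableAt)
      ((hh.continuous_deriv le_rfl).intervalIntegrable _ _)]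
    rw [hfr _ (hBfr s hs), hfr _ (hAfr s hs), sub_zero]
  -- the set of components
  set T : Set (Set ℝ) := {C | ∃ s ∈ S, C = Ioo (A s) (B s)} with hT
  have hTdisj : ∀ C ∈ T, ∀ C' ∈ T, C ≠ C' → Disjoint C C' := by
    rintro C ⟨s, hs, rfl⟩ C' ⟨s', hs', rfl⟩ hne
    rw [Set.disjoint_iff_inter_eq_empty]
    by_contra hint
    obtain ⟨t, ht, ht'⟩ := Set.nonempty_iff_ne_empty.2 hint
    have htS : t ∈ S := hsub s hs ht
    obtain ⟨e1, e2⟩ := hcomp s hs t ht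
    obtain ⟨e1', e2'⟩ := hcomp s' hs' t ht'
    exact hne (by rw [← e1, ← e2, ← e1', ← e2'])
  have hTc : T.Countable := by
    apply Set.PairwiseDisjoint.countable_of_isOpen (s := fun C : Set ℝ => C) (a := T)
    · intro C hC C' hC' hne
      exact hTdisj C hC C' hC' hne
    · rintro C ⟨s, hs, rfl⟩
      exact isOpen_Ioo
    · rintro C ⟨s, hs, rfl⟩
      exact ⟨s, hAlt s hs, hBgt s hs⟩
  haveI := hTc.to_subtype
  have hU : ⋃ c : T, (c : Set ℝ) = S := by
    apply Set.eq_of_subset_of_subset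
    · rintro t ht
      obtain ⟨c, hc⟩ := Set.mem_iUnion.1 ht
      obtain ⟨s, hs, hcs⟩ := c.2
      exact hsub s hs (by rw [← hcs]; exact hc)
    · intro s hs
      exact Set.mem_iUnion.2 ⟨⟨Ioo (A s) (B s), ⟨s, hs, rfl⟩⟩, hAlt s hs, hBgt s hs⟩
  rw [← hU]
  rw [integral_iUnion (fun c => by obtain ⟨s, hs, hcs⟩ := c.2; rw [hcs]; exact measurableSet_Ioo)
    (fun c c' hne => hTdisj _ c.2 _ c'.2 (fun he => hne (Subtype.ext he)))
    (by rw [hU]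
        exact ((hh.continuous_deriv le_rfl).integrableOn_Icc).mono_set hr)]
  have : ∀ c : T, ∫ t in (c : Set ℝ), deriv h t = 0 := by
    rintro ⟨C, s, hs, rfl⟩
    exact hFTC s hs
  rw [tsum_congr this, tsum_zero]

lemma setIntegral_pd_eq_zero {n : ℕ} {D : Set (EuclideanSpace ℝ (Fin (n+1)))}
    (hD : IsOpen D) (hDb : Bornology.IsBounded D) {F : EuclideanSpace ℝ (Fin (n+1)) → ℝ}
    (hF : ContDiff ℝ 1 F) (hfr : ∀ x ∈ frontier D, F x = 0) (i : Fin (n+1)) :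
    ∫ x in D, pd i F x = 0 := by
  classical
  set v₀ : EuclideanSpace ℝ (Fin (n+1)) := EuclideanSpace.single i (1:ℝ) with hv₀
  have hFd : Differentiable ℝ F := hF.differentiable (by simp)
  have hpdc : Continuous (pd i F) := by
    have h1 : ContDiff ℝ (0:ℕ) (pd i F) := contDiff_pd (by exact_mod_cast hF) i
    exact h1.continuous
  obtain ⟨R, hR⟩ := hDb.subset_closedBall 0
  have hDmeas : MeasurableSet D := hD.measurableSet
  have hint : IntegrableOn (pd i F) D volume := by
    apply IntegrableOn.mono_set (t := closure D) _ subset_closure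
    exact hpdc.continuousOn.integrableOn_compact hDb.isCompact_closure
  set g : EuclideanSpace ℝ (Fin (n+1)) → ℝ := D.indicator (pd i F) with hg
  have hgint : Integrable g volume := hint.integrable_indicator hDmeas
  have step1 : ∫ x in D, pd i F x = ∫ x, g x := (integral_indicator hDmeas).symm
  set e := (MeasurableEquiv.toLp 2 (Fin (n+1) → ℝ)).symm with he
  have hcoe : ∀ (x : Fin (n+1) → ℝ) (j : Fin (n+1)), (e.symm x) j = x j := by
    intro x j
    rfl
  have hep : MeasurePreserving (⇑e.symm) volume volume :=
    (EuclideanSpace.volume_preserving_symm_measurableEquiv_toLp (Fin (n+1))).symm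
  have step2 : ∫ x, g x = ∫ y : Fin (n+1) → ℝ, g (e.symm y) :=
    (hep.integral_comp e.symm.measurableEmbedding g).symm
  set q := MeasurableEquiv.piFinSuccAbove (fun _ : Fin (n+1) => ℝ) i with hqdef
  have hqp : MeasurePreserving (⇑q.symm)
      (((volume : Measure ℝ)).prod (volume : Measure (Fin n → ℝ)))
      (volume : Measure (Fin (n+1) → ℝ)) := by
    have := (measurePreserving_piFinSuccAbove (fun _ : Fin (n+1) => (volume : Measure ℝ)) i).symm
    exact this
  have step3 : ∫ y : Fin (n+1) → ℝ, g (e.symm y)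
      = ∫ z : ℝ × (Fin n → ℝ), g (e.symm (q.symm z)) ∂((volume : Measure ℝ).prod volume) :=
    (hqp.integral_comp q.symm.measurableEmbedding _).symm
  have hq_symm : ∀ z : ℝ × (Fin n → ℝ), q.symm z = i.insertNth z.1 z.2 := by
    intro z; simp [hqdef, MeasurableEquiv.piFinSuccAbove, Fin.insertNthEquiv]
  have hσ : ∀ (y : Fin n → ℝ) (t : ℝ),
      e.symm (q.symm (t, y)) = e.symm (q.symm (0, y)) + t • v₀ := by
    intro y t
    have h1 : ∀ j : Fin (n+1), (i.insertNth t y : Fin (n+1) → ℝ) j = (i.insertNth (0:ℝ) y : Fin (n+1) → ℝ) j + t * (if j = i then 1 else 0) := by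
      intro j
      by_cases hj : j = i
      · subst hj; simp [Fin.insertNth_apply_same]
      · obtain ⟨k, rfl⟩ := Fin.exists_succAbove_eq hj
        simp [Fin.insertNth_apply_succAbove, Fin.succAbove_ne i k]
    ext j
    rw [PiLp.add_apply, PiLp.smul_apply, hcoe, hcoe, hq_symm, hq_symm]
    simp only [smul_eq_mul]
    rw [h1 j, hv₀, EuclideanSpace.single_apply]
  have hinner : ∀ y : Fin n → ℝ, (∫ t : ℝ, g (e.symm (q.symm (t, y)))) = 0 := by
    intro y
    set c : EuclideanSpace ℝ (Fin (n+1)) := e.symm (q.symm ((0:ℝ), y)) with hc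
    set σ : ℝ → EuclideanSpace ℝ (Fin (n+1)) := fun t => c + t • v₀ with hσdef
    have hσeq : ∀ t, e.symm (q.symm (t, y)) = σ t := fun t => hσ y t
    have hσcont : Continuous σ := by
      exact continuous_const.add (continuous_id.smul continuous_const)
    set Sy : Set ℝ := σ ⁻¹' D with hSydef
    have hSyopen : IsOpen Sy := hD.preimage hσcont
    have hσcoord : ∀ t, (σ t) i = t := by
      intro t
      rw [← hσeq t, hcoe, hq_symm]
      simp
    have hSybdd : Bornology.IsBounded Sy := by
      apply (Metric.isBounded_Icc (-(R+1)) (R+1)).subset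
      intro t ht
      have h2 : ‖σ t‖ ≤ R := by
        have h3 := hR ht
        simpa [Metric.mem_closedBall, dist_zero_right] using h3
      have h3 := abs_coord_le_norm (σ t) i
      rw [hσcoord t] at h3
      have h4 := abs_le.1 (h3.trans h2)
      exact ⟨by linarith [h4.1], by linarith [h4.2]⟩
    set hy : ℝ → ℝ := fun t => F (σ t) with hhy
    have hyC1 : ContDiff ℝ 1 hy :=
      hF.comp (contDiff_const.add (contDiff_id.smul contDiff_const))
    have hline : ∀ t : ℝ, HasDerivAt σ v₀ t := by
      intro t
      have h1 : HasDerivAt (fun s : ℝ => s • v₀) ((1:ℝ) • v₀) t := (hasDerivAt_id t).smul_const v₀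
      rw [one_smul] at h1
      exact h1.const_add c
    have hyderiv : ∀ t, deriv hy t = pd i F (σ t) := by
      intro t
      exact ((hFd (σ t)).hasFDerivAt.comp_hasDerivAt t (hline t)).deriv
    have hfrSy : ∀ t ∈ frontier Sy, hy t = 0 := by
      intro t ht
      apply hfr
      rw [hSyopen.frontier_eq] at ht
      rw [hD.frontier_eq]
      exact ⟨hσcont.closure_preimage_subset D ht.1, ht.2⟩
    have hcalc : ∀ t, g (e.symm (q.symm (t, y))) = Sy.indicator (deriv hy) t := by
      intro t
      rw [hσeq t, hg]
      by_cases ht : σ t ∈ D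
      · rw [Set.indicator_of_mem ht, Set.indicator_of_mem (show t ∈ Sy from ht), hyderiv t]
      · rw [Set.indicator_of_notMem ht, Set.indicator_of_notMem (show t ∉ Sy from ht)]
    calc (∫ t : ℝ, g (e.symm (q.symm (t, y))))
        = ∫ t : ℝ, Sy.indicator (deriv hy) t := by
          exact integral_congr_ae (Filter.Eventually.of_forall hcalc)
      _ = ∫ t in Sy, deriv hy t := integral_indicator hSyopen.measurableSet
      _ = 0 := integral_deriv_eq_zero_1d hSyopen hSybdd hyC1 hfrSy
  have hGint : Integrable (fun z : ℝ × (Fin n → ℝ) => g (e.symm (q.symm z)))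
      ((volume : Measure ℝ).prod volume) := by
    have h1 : Integrable (g ∘ ⇑e.symm) volume :=
      (hep.integrable_comp_emb e.symm.measurableEmbedding).2 hgint
    have h2 := (hqp.integrable_comp_emb q.symm.measurableEmbedding).2 h1
    exact h2
  rw [step1, step2, step3, integral_prod_symm _ hGint]
  calc (∫ (y : Fin n → ℝ), ∫ (t : ℝ), g (e.symm (q.symm (t, y))))
      = ∫ (_y : Fin n → ℝ), (0:ℝ) := integral_congr_ae (Filter.Eventually.of_forall hinner)
    _ = 0 := integral_zero _ _

lemma contIntegrableOn {d : ℕ} {D : Set (EuclideanSpace ℝ (Fin d))} (hDb : Bornology.IsBounded D)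
    {h : EuclideanSpace ℝ (Fin d) → ℝ} (hc : Continuous h) : IntegrableOn h D volume :=
  (hc.continuousOn.integrableOn_compact hDb.isCompact_closure).mono_set subset_closure

lemma young_aux {a b p q : ℝ} (hp : 0 < p) (hpq : 1 ≤ 4*p*q) : -(a*b) ≤ p*a^2 + q*b^2 := by
  nlinarith [sq_nonneg (2*p*a + b), sq_nonneg b, mul_pos hp hp]

end BilapAux
end

set_option maxHeartbeats 2000000 in
open BilapAux in
/-- If `α ∈ W^{2,∞}(D)` with `α ≥ α_min > 0`, then for every
`f ∈ X(D)` the solution `u = Tf` of `Δ(αΔu) = βf` in `D`, `u = Δu = 0` on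
`∂D`, satisfies `Δ²u ∈ L²(D)` with `‖Δ²u‖_{L²(D)} ≤ C ‖f‖_{L²(D)}`, with `C`
independent of `f`. -/
theorem bilaplacian_regularity_estimate
    (d : ℕ) (D : Set (EuclideanSpace ℝ (Fin d)))
    (hD : IsOpen D) (hDb : Bornology.IsBounded D)
    (α β : EuclideanSpace ℝ (Fin d) → ℝ)
    (αmin : ℝ) (hαmin : 0 < αmin) (hα : ∀ x, αmin ≤ α x)
    (hαreg : ContDiff ℝ 2 α)
    (Mα : ℝ) (hαW2 : ∀ x, |α x| ≤ Mα ∧ ‖iteratedFDeriv ℝ 1 α x‖ ≤ Mα ∧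
      ‖iteratedFDeriv ℝ 2 α x‖ ≤ Mα)
    (Mβ : ℝ) (hβ : ∀ x, |β x| ≤ Mβ) :
    ∃ C > 0, ∀ f u : EuclideanSpace ℝ (Fin d) → ℝ,
      ContDiff ℝ 2 f → (∀ x ∈ frontier D, f x = 0) →
      ContDiff ℝ 4 u →
      (∀ x ∈ D, lap (fun y => α y * lap u y) x = β x * f x) →
      (∀ x ∈ frontier D, u x = 0) → (∀ x ∈ frontier D, lap u x = 0) →
      (MemLp (fun x => lap (lap u) x) 2 (volume.restrict D) ∧
       Real.sqrt (∫ x in D, (lap (lap u) x) ^ 2) ≤ C * Real.sqrt (∫ x in D, (f x) ^ 2)) := by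
  classical
  obtain _ | n := d
  · -- dimension 0 : the Laplacian is the empty sum, i.e. zero
    refine ⟨1, one_pos, fun f u hf hfb hu hequ hub hlub => ?_⟩
    have hlz : ∀ (h : EuclideanSpace ℝ (Fin 0) → ℝ) (x : EuclideanSpace ℝ (Fin 0)),
        lap h x = 0 := by
      intro h x
      simp [lap]
    constructor
    · have hzero : (fun x => lap (lap u) x) = (0 : EuclideanSpace ℝ (Fin 0) → ℝ) :=
        funext fun x => hlz _ x
      rw [hzero]
      exact MemLp.zero
    · have hzero : (∫ x in D, (lap (lap u) x)^2) = 0 := by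
        simp [hlz]
      rw [hzero, Real.sqrt_zero, one_mul]
      exact Real.sqrt_nonneg _
  · -- main case, dimension n+1
    obtain ⟨R0, hR0⟩ := hDb.subset_closedBall 0
    set R : ℝ := max R0 1 with hRdef
    have hR1 : (1:ℝ) ≤ R := le_max_right _ _
    have hRpos : (0:ℝ) < R := lt_of_lt_of_le one_pos hR1
    have hDR : D ⊆ Metric.closedBall 0 R :=
      hR0.trans (Metric.closedBall_subset_closedBall (le_max_left _ _))
    have hMα0 : 0 ≤ Mα := le_trans (abs_nonneg _) (hαW2 0).1
    have hMβ0 : 0 ≤ Mβ := le_trans (abs_nonneg _) (hβ 0)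
    set dd : ℝ := ((n:ℝ) + 1) with hdd
    have hdd0 : (0:ℝ) < dd := by positivity
    set c1 : ℝ := 4*R^2*Mβ^2 with hc1
    set c2 : ℝ := 4*R^2*c1 with hc2
    set c3 : ℝ := c2/αmin^2 with hc3
    set c4 : ℝ := 2/αmin^2*(c1 + dd*Mα^2*c3) with hc4
    set c5 : ℝ := 3/αmin^2*(Mβ^2 + 4*dd*Mα^2*c4 + (dd*Mα)^2*c3) with hc5
    have hc1n : 0 ≤ c1 := by rw [hc1]; positivity
    have hc2n : 0 ≤ c2 := by rw [hc2]; positivity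
    have hc3n : 0 ≤ c3 := by rw [hc3]; positivity
    have hc4n : 0 ≤ c4 := by rw [hc4]; positivity
    have hc5n : 0 ≤ c5 := by rw [hc5]; positivity
    refine ⟨Real.sqrt c5 + 1, by positivity, fun f u hf hfb hu hequ hub hlub => ?_⟩
    have hDmeas : MeasurableSet D := hD.measurableSet
    -- smoothness facts
    have hu2 : ContDiff ℝ 2 u := hu.of_le (by norm_num)
    have hu31 : ContDiff ℝ ((3:ℕ)+1) u := by exact_mod_cast hu
    have hv2 : ContDiff ℝ 2 (lap u) := by
      have hfun : lap u = fun x => ∑ i : Fin (n+1), pd i (pd i u) x := funext (lap_eq hu2)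
      rw [hfun]
      apply ContDiff.sum
      intro i _
      have h1 : ContDiff ℝ ((2:ℕ)+1) (pd i u) := by exact_mod_cast contDiff_pd hu31 i
      exact_mod_cast contDiff_pd h1 i
    set w : EuclideanSpace ℝ (Fin (n+1)) → ℝ := fun y => α y * lap u y with hwdef
    have hw2 : ContDiff ℝ 2 w := hαreg.mul hv2
    have hw11 : ContDiff ℝ ((1:ℕ)+1) w := by exact_mod_cast hw2
    have hv11 : ContDiff ℝ ((1:ℕ)+1) (lap u) := by exact_mod_cast hv2
    have hwd : Differentiable ℝ w := hw2.differentiable (by norm_num)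
    have hvd : Differentiable ℝ (lap u) := hv2.differentiable (by norm_num)
    have hαd : Differentiable ℝ α := hαreg.differentiable (by norm_num)
    have hwx : ∀ x, w x = α x * lap u x := fun x => by rw [hwdef]
    -- continuity facts
    have hfc : Continuous f := hf.continuous
    have hvc : Continuous (lap u) := hv2.continuous
    have hwc : Continuous w := hw2.continuous
    have hpdwc : ∀ i, Continuous (pd i w) := fun i => (contDiff_pd hw11 i).continuous
    have hpdvc : ∀ i, Continuous (pd i (lap u)) := fun i => (contDiff_pd hv11 i).continuous
    have hpdpdwc : ∀ i, Continuous (pd i (pd i w)) := by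
      intro i
      have h1 : ContDiff ℝ ((0:ℕ)+1) (pd i w) := by exact_mod_cast contDiff_pd hw11 i
      exact (contDiff_pd h1 i).continuous
    have hgc : Continuous (fun x => lap (lap u) x) := by
      have hfun : (fun x => lap (lap u) x) = fun x => ∑ i : Fin (n+1), pd i (pd i (lap u)) x :=
        funext (lap_eq hv2)
      rw [hfun]
      apply continuous_finset_sum
      intro i _
      have h1 : ContDiff ℝ ((0:ℕ)+1) (pd i (lap u)) := by exact_mod_cast contDiff_pd hv11 i
      exact (contDiff_pd h1 i).continuous
    have hlapwc : Continuous (fun x => lap w x) := by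
      have hfun : (fun x => lap w x) = fun x => ∑ i : Fin (n+1), pd i (pd i w) x :=
        funext (lap_eq hw2)
      rw [hfun]
      exact continuous_finset_sum _ (fun i _ => hpdpdwc i)
    -- boundary value of w
    have hwb : ∀ x ∈ frontier D, w x = 0 := fun x hx => by
      rw [hwx x, hlub x hx, mul_zero]
    -- integrals
    set If : ℝ := ∫ x in D, (f x)^2 with hIf
    set Iw : ℝ := ∫ x in D, (w x)^2 with hIw
    set Iw' : ℝ := ∫ x in D, ∑ i : Fin (n+1), (pd i w x)^2 with hIw'
    set Iv : ℝ := ∫ x in D, (lap u x)^2 with hIv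
    set Iv' : ℝ := ∫ x in D, ∑ i : Fin (n+1), (pd i (lap u) x)^2 with hIv'
    set Ig : ℝ := ∫ x in D, (lap (lap u) x)^2 with hIg
    have hIfn : 0 ≤ If := setIntegral_nonneg hDmeas (fun x _ => sq_nonneg _)
    -- Green identity
    have hGreenTerm : ∀ i : Fin (n+1),
        (∫ x in D, (w x * pd i (pd i w) x + pd i w x * pd i w x)) = 0 := by
      intro i
      have hC1 : ContDiff ℝ 1 (fun y => w y * pd i w y) := by
        have h1 : ContDiff ℝ (1:ℕ) (pd i w) := contDiff_pd hw11 i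
        exact (hw2.of_le (by norm_num)).mul (by exact_mod_cast h1)
      have hb : ∀ x ∈ frontier D, w x * pd i w x = 0 := fun x hx => by
        rw [hwb x hx, zero_mul]
      calc (∫ x in D, (w x * pd i (pd i w) x + pd i w x * pd i w x))
          = ∫ x in D, pd i (fun y => w y * pd i w y) x :=
            setIntegral_congr_fun hDmeas (fun x _ =>
              (pd_mul hwd ((contDiff_pd hw11 i).differentiable (by simp)) i x).symm)
        _ = 0 := setIntegral_pd_eq_zero hD hDb hC1 hb i
    have hGreen : Iw' = - ∫ x in D, w x * lap w x := by
      have hsum0 : (∫ x in D, ∑ i : Fin (n+1),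
          (w x * pd i (pd i w) x + pd i w x * pd i w x)) = 0 := by
        rw [integral_finset_sum _ (fun i _ =>
          (contIntegrableOn hDb ((hwc.fun_mul (hpdpdwc i)).fun_add ((hpdwc i).fun_mul (hpdwc i)))))]
        exact Finset.sum_eq_zero (fun i _ => hGreenTerm i)
      have hptw : ∀ x, (∑ i : Fin (n+1), (w x * pd i (pd i w) x + pd i w x * pd i w x))
          = w x * lap w x + ∑ i : Fin (n+1), (pd i w x)^2 := by
        intro x
        rw [Finset.sum_add_distrib, ← Finset.mul_sum, ← lap_eq hw2]
        congr 1
        exact Finset.sum_congr rfl (fun i _ => (pow_two (pd i w x)).symm)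
      rw [integral_congr_ae (Filter.Eventually.of_forall hptw)] at hsum0
      rw [integral_add (contIntegrableOn hDb (hwc.fun_mul hlapwc))
        (contIntegrableOn hDb (continuous_finset_sum _ (fun i _ => (hpdwc i).fun_pow 2)))] at hsum0
      rw [hIw']
      linarith only [hsum0]
    -- Poincaré identity
    set i0 : Fin (n+1) := ⟨0, Nat.succ_pos n⟩ with hi0
    have hcoordD : Differentiable ℝ (fun y : EuclideanSpace ℝ (Fin (n+1)) => y i0) :=
      (EuclideanSpace.proj (𝕜 := ℝ) i0).differentiable
    have hcoordC : ContDiff ℝ 1 (fun y : EuclideanSpace ℝ (Fin (n+1)) => y i0) :=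
      (EuclideanSpace.proj (𝕜 := ℝ) i0).contDiff
    have hcoordc : Continuous (fun y : EuclideanSpace ℝ (Fin (n+1)) => y i0) :=
      (EuclideanSpace.proj (𝕜 := ℝ) i0).continuous
    have hpdcoord : ∀ x : EuclideanSpace ℝ (Fin (n+1)),
        pd i0 (fun y : EuclideanSpace ℝ (Fin (n+1)) => y i0) x = 1 := by
      intro x
      show fderiv ℝ (fun y : EuclideanSpace ℝ (Fin (n+1)) => y i0) x
        (EuclideanSpace.single i0 (1:ℝ)) = 1
      have hfd : fderiv ℝ (fun y : EuclideanSpace ℝ (Fin (n+1)) => y i0) x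
          = EuclideanSpace.proj (𝕜 := ℝ) i0 := (EuclideanSpace.proj (𝕜 := ℝ) i0).fderiv
      rw [hfd]
      simp
    have hPoinTerm : (∫ x in D, ((x i0) * (2*(w x * pd i0 w x)) + w x * w x)) = 0 := by
      have hC1 : ContDiff ℝ 1 (fun y : EuclideanSpace ℝ (Fin (n+1)) => (y i0) * (w y * w y)) :=
        hcoordC.mul ((hw2.of_le (by norm_num)).mul (hw2.of_le (by norm_num)))
      have hb : ∀ x ∈ frontier D, (x i0) * (w x * w x) = 0 := fun x hx => by
        rw [hwb x hx]; ring
      calc (∫ x in D, ((x i0) * (2*(w x * pd i0 w x)) + w x * w x))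
          = ∫ x in D, pd i0 (fun y : EuclideanSpace ℝ (Fin (n+1)) => (y i0) * (w y * w y)) x := by
            apply setIntegral_congr_fun hDmeas
            intro x _
            rw [pd_mul (h := fun y => w y * w y) hcoordD (hwd.mul hwd) i0 x, pd_mul hwd hwd i0 x, hpdcoord x]
            ring
        _ = 0 := setIntegral_pd_eq_zero hD hDb hC1 hb i0
    have hPoin : Iw = - ∫ x in D, (x i0) * (2*(w x * pd i0 w x)) := by
      have h1 : (∫ x in D, ((x i0)*(2*(w x * pd i0 w x)) + w x * w x))
          = (∫ x in D, (x i0)*(2*(w x * pd i0 w x))) + ∫ x in D, w x * w x :=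
        integral_add (contIntegrableOn hDb (hcoordc.fun_mul (continuous_const.fun_mul (hwc.fun_mul (hpdwc i0)))))
          (contIntegrableOn hDb (hwc.fun_mul hwc))
      have h2 : (∫ x in D, w x * w x) = Iw := by
        rw [hIw]
        exact setIntegral_congr_fun hDmeas (fun x _ => (pow_two (w x)).symm)
      rw [h1, h2] at hPoinTerm
      linarith only [hPoinTerm]
    -- Poincaré inequality : Iw ≤ 4 R^2 Iw'
    have hIwIw' : Iw ≤ 4*R^2*Iw' := by
      have hmono : - ∫ x in D, (x i0)*(2*(w x * pd i0 w x))
          ≤ ∫ x in D, ((1/2)*(w x)^2 + 2*R^2*(∑ i : Fin (n+1), (pd i w x)^2)) := by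
        rw [← integral_neg]
        apply setIntegral_mono_on
          ((contIntegrableOn hDb (hcoordc.fun_mul (continuous_const.fun_mul (hwc.fun_mul (hpdwc i0))))).neg)
          (contIntegrableOn hDb ((continuous_const.fun_mul (hwc.fun_pow 2)).fun_add
            (continuous_const.fun_mul (continuous_finset_sum _ (fun i _ => (hpdwc i).fun_pow 2)))))
          hDmeas
        intro x hx
        simp only [Pi.neg_apply]
        have hxR : |x i0| ≤ R := by
          refine (abs_coord_le_norm x i0).trans ?_
          have := hDR hx
          simpa [Metric.mem_closedBall, dist_zero_right] using this
        have hx2 : (x i0)^2 ≤ R^2 := sq_le_sq' (abs_le.1 hxR).1 (abs_le.1 hxR).2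
        have h1 : -((w x) * (2*(x i0)*(pd i0 w x)))
            ≤ (1/2)*(w x)^2 + (1/2)*(2*(x i0)*(pd i0 w x))^2 :=
          young_aux (by norm_num) (by norm_num)
        have h2 : (pd i0 w x)^2 ≤ ∑ i : Fin (n+1), (pd i w x)^2 :=
          Finset.single_le_sum (f := fun i => (pd i w x)^2) (fun i _ => sq_nonneg _)
            (Finset.mem_univ i0)
        have e2 : (x i0)^2*(pd i0 w x)^2 ≤ R^2*(pd i0 w x)^2 :=
          mul_le_mul_of_nonneg_right hx2 (sq_nonneg _)
        have e3 : R^2*(pd i0 w x)^2 ≤ R^2*(∑ i : Fin (n+1), (pd i w x)^2) :=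
          mul_le_mul_of_nonneg_left h2 (by positivity)
        linarith only [h1, e2, e3]
      have hsplit : (∫ x in D, ((1/2)*(w x)^2 + 2*R^2*(∑ i : Fin (n+1), (pd i w x)^2)))
          = (1/2)*Iw + 2*R^2*Iw' := by
        rw [integral_add (contIntegrableOn hDb (continuous_const.fun_mul (hwc.fun_pow 2)))
          (contIntegrableOn hDb (continuous_const.fun_mul
            (continuous_finset_sum _ (fun i _ => (hpdwc i).fun_pow 2)))),
          integral_const_mul, integral_const_mul, ← hIw, ← hIw']
      rw [hsplit] at hmono
      rw [hPoin]
      linarith only [hmono, hPoin]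
    -- Energy estimate : Iw' ≤ c1 * If
    have hE1 : Iw' ≤ (1/(8*R^2))*Iw + (2*R^2*Mβ^2)*If := by
      rw [hGreen]
      have hmono : - ∫ x in D, w x * lap w x
          ≤ ∫ x in D, ((1/(8*R^2))*(w x)^2 + (2*R^2*Mβ^2)*(f x)^2) := by
        rw [← integral_neg]
        apply setIntegral_mono_on
          ((contIntegrableOn hDb (hwc.fun_mul hlapwc)).neg)
          (contIntegrableOn hDb ((continuous_const.fun_mul (hwc.fun_pow 2)).fun_add
            (continuous_const.fun_mul (hfc.fun_pow 2))))
          hDmeas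
        intro x hx
        simp only [Pi.neg_apply]
        rw [hequ x hx]
        have hq : (1:ℝ) ≤ 4*(1/(8*R^2))*(2*R^2) := by
          have hR2 : R^2 ≠ 0 := by positivity
          have h48 : 4*(1/(8*R^2))*(2*R^2) = (1:ℝ) := by
            field_simp
            ring
          linarith only [h48]
        have h1 : -((w x)*(β x * f x)) ≤ (1/(8*R^2))*(w x)^2 + (2*R^2)*((β x * f x))^2 :=
          young_aux (by positivity) hq
        have hβ2 : (β x)^2 ≤ Mβ^2 := sq_le_sq' (abs_le.1 (hβ x)).1 (abs_le.1 (hβ x)).2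
        have h2 : (β x)^2*(f x)^2 ≤ Mβ^2*(f x)^2 :=
          mul_le_mul_of_nonneg_right hβ2 (sq_nonneg _)
        have h5 : R^2*((β x)^2*(f x)^2) ≤ R^2*(Mβ^2*(f x)^2) :=
          mul_le_mul_of_nonneg_left h2 (by positivity)
        linarith only [h1, h5]
      have hsplit : (∫ x in D, ((1/(8*R^2))*(w x)^2 + (2*R^2*Mβ^2)*(f x)^2))
          = (1/(8*R^2))*Iw + (2*R^2*Mβ^2)*If := by
        rw [integral_add (contIntegrableOn hDb (continuous_const.fun_mul (hwc.fun_pow 2)))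
          (contIntegrableOn hDb (continuous_const.fun_mul (hfc.fun_pow 2))),
          integral_const_mul, integral_const_mul, ← hIw, ← hIf]
      rw [hsplit] at hmono
      exact hmono
    have hIw'If : Iw' ≤ c1*If := by
      have h1 : (1/(8*R^2))*Iw ≤ (1/(8*R^2))*(4*R^2*Iw') :=
        mul_le_mul_of_nonneg_left hIwIw' (by positivity)
      have h2 : (1/(8*R^2))*(4*R^2*Iw') = (1/2)*Iw' := by
        have hR2 : R^2 ≠ 0 := by positivity
        field_simp
        ring
      have h3 : c1*If = 4*(R^2*(Mβ^2*If)) := by rw [hc1]; ring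
      have h4 : (2*R^2*Mβ^2)*If = 2*(R^2*(Mβ^2*If)) := by ring
      linarith only [hE1, h1, h2, h3, h4]
    have hIwIf : Iw ≤ c2*If := by
      have h1 : 4*R^2*Iw' ≤ 4*R^2*(c1*If) :=
        mul_le_mul_of_nonneg_left hIw'If (by positivity)
      have h2 : 4*R^2*(c1*If) = c2*If := by rw [hc2]; ring
      linarith only [hIwIw', h1, h2]
    -- Iv in terms of Iw
    have hS4 : αmin^2*Iv ≤ Iw := by
      have h1 : (∫ x in D, αmin^2*(lap u x)^2) ≤ ∫ x in D, (w x)^2 := by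
        apply setIntegral_mono_on (contIntegrableOn hDb (continuous_const.fun_mul (hvc.fun_pow 2)))
          (contIntegrableOn hDb (hwc.fun_pow 2)) hDmeas
        intro x _
        have h2 : (w x)^2 = (α x)^2*(lap u x)^2 := by rw [hwx x]; ring
        have h3 : αmin^2 ≤ (α x)^2 := by exact pow_le_pow_left₀ (le_of_lt hαmin) (hα x) 2
        have h4 := mul_le_mul_of_nonneg_right h3 (sq_nonneg (lap u x))
        linarith only [h2, h4]
      rw [integral_const_mul, ← hIv, ← hIw] at h1
      exact h1
    -- Iv' in terms of Iw' and Iv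
    have hS5 : αmin^2*Iv' ≤ 2*Iw' + 2*dd*Mα^2*Iv := by
      have h1 : (∫ x in D, αmin^2*(∑ i : Fin (n+1), (pd i (lap u) x)^2))
          ≤ ∫ x in D, (2*(∑ i : Fin (n+1), (pd i w x)^2) + 2*dd*Mα^2*(lap u x)^2) := by
        apply setIntegral_mono_on
          (contIntegrableOn hDb (continuous_const.fun_mul
            (continuous_finset_sum _ (fun i _ => (hpdvc i).fun_pow 2))))
          (contIntegrableOn hDb ((continuous_const.fun_mul
            (continuous_finset_sum _ (fun i _ => (hpdwc i).fun_pow 2))).fun_add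
            (continuous_const.fun_mul (hvc.fun_pow 2))))
          hDmeas
        intro x _
        have hper : ∀ i : Fin (n+1),
            αmin^2*(pd i (lap u) x)^2 ≤ 2*(pd i w x)^2 + 2*Mα^2*(lap u x)^2 := by
          intro i
          have hpdwx : pd i w x = α x * pd i (lap u) x + lap u x * pd i α x := by
            have : pd i w x = pd i (fun y => α y * lap u y) x := by rw [hwdef]
            rw [this, pd_mul hαd hvd i x]
          have hsq : (α x)^2*(pd i (lap u) x)^2
              = (pd i w x - lap u x * pd i α x)^2 := by rw [hpdwx]; ring
          have h3 : αmin^2 ≤ (α x)^2 := by exact pow_le_pow_left₀ (le_of_lt hαmin) (hα x) 2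
          have ha := mul_le_mul_of_nonneg_right h3 (sq_nonneg (pd i (lap u) x))
          have hc : (pd i w x - lap u x * pd i α x)^2
              ≤ 2*(pd i w x)^2 + 2*(lap u x * pd i α x)^2 := by
            linarith only [sq_nonneg (pd i w x + lap u x * pd i α x)]
          have habs := abs_le.1 (abs_pd_le (hαW2 x).2.1 i)
          have hpda : (pd i α x)^2 ≤ Mα^2 := sq_le_sq' habs.1 habs.2
          have hd2 : (lap u x * pd i α x)^2 ≤ Mα^2*(lap u x)^2 := by
            have := mul_le_mul_of_nonneg_left hpda (sq_nonneg (lap u x))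
            linarith only [this]
          linarith only [ha, hsq, hc, hd2]
        calc αmin^2*(∑ i : Fin (n+1), (pd i (lap u) x)^2)
            = ∑ i : Fin (n+1), αmin^2*(pd i (lap u) x)^2 := by rw [Finset.mul_sum]
          _ ≤ ∑ i : Fin (n+1), (2*(pd i w x)^2 + 2*Mα^2*(lap u x)^2) :=
              Finset.sum_le_sum (fun i _ => hper i)
          _ = 2*(∑ i : Fin (n+1), (pd i w x)^2) + 2*dd*Mα^2*(lap u x)^2 := by
              rw [Finset.sum_add_distrib, ← Finset.mul_sum, Finset.sum_const,
                Finset.card_univ, Fintype.card_fin, nsmul_eq_mul, hdd]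
              push_cast
              ring
      rw [integral_const_mul, ← hIv'] at h1
      have hsplit : (∫ x in D, (2*(∑ i : Fin (n+1), (pd i w x)^2) + 2*dd*Mα^2*(lap u x)^2))
          = 2*Iw' + 2*dd*Mα^2*Iv := by
        rw [integral_add (contIntegrableOn hDb (continuous_const.fun_mul
            (continuous_finset_sum _ (fun i _ => (hpdwc i).fun_pow 2))))
          (contIntegrableOn hDb (continuous_const.fun_mul (hvc.fun_pow 2))),
          integral_const_mul, integral_const_mul, ← hIw', ← hIv]
      rw [hsplit] at h1
      exact h1
    -- Ig in terms of the rest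
    have hlapweq : ∀ x, lap w x = α x * lap (lap u) x
        + 2*∑ i : Fin (n+1), pd i α x * pd i (lap u) x + lap u x * lap α x := by
      intro x
      have : lap w x = lap (fun y => α y * lap u y) x := by rw [hwdef]
      rw [this]
      exact lap_mul hαreg hv2 x
    have hS6 : αmin^2*Ig ≤ 3*Mβ^2*If + 12*dd*Mα^2*Iv' + 3*(dd*Mα)^2*Iv := by
      have h1 : (∫ x in D, αmin^2*(lap (lap u) x)^2)
          ≤ ∫ x in D, (3*Mβ^2*(f x)^2
            + 12*dd*Mα^2*(∑ i : Fin (n+1), (pd i (lap u) x)^2)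
            + 3*(dd*Mα)^2*(lap u x)^2) := by
        apply setIntegral_mono_on (contIntegrableOn hDb (continuous_const.fun_mul (hgc.fun_pow 2)))
          (contIntegrableOn hDb (((continuous_const.fun_mul (hfc.fun_pow 2)).fun_add
            (continuous_const.fun_mul (continuous_finset_sum _ (fun i _ => (hpdvc i).fun_pow 2)))).fun_add
            (continuous_const.fun_mul (hvc.fun_pow 2))))
          hDmeas
        intro x hx
        have heqx : α x * lap (lap u) x
            = β x * f x - 2*(∑ i : Fin (n+1), pd i α x * pd i (lap u) x)
              - lap u x * lap α x := by
          have h2 := hlapweq x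
          rw [hequ x hx] at h2
          linarith only [h2]
        have h3 : αmin^2 ≤ (α x)^2 := by exact pow_le_pow_left₀ (le_of_lt hαmin) (hα x) 2
        have hA : αmin^2*(lap (lap u) x)^2 ≤ (α x)^2*(lap (lap u) x)^2 :=
          mul_le_mul_of_nonneg_right h3 (sq_nonneg _)
        have hB : (α x)^2*(lap (lap u) x)^2
            = (β x * f x - 2*(∑ i : Fin (n+1), pd i α x * pd i (lap u) x)
              - lap u x * lap α x)^2 := by
          rw [← heqx]; ring
        have hC : (β x * f x - 2*(∑ i : Fin (n+1), pd i α x * pd i (lap u) x)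
              - lap u x * lap α x)^2
            ≤ 3*(β x * f x)^2 + 12*(∑ i : Fin (n+1), pd i α x * pd i (lap u) x)^2
              + 3*(lap u x * lap α x)^2 := by
          linarith only [sq_nonneg (β x * f x + 2*(∑ i : Fin (n+1), pd i α x * pd i (lap u) x)),
            sq_nonneg (β x * f x + lap u x * lap α x),
            sq_nonneg (2*(∑ i : Fin (n+1), pd i α x * pd i (lap u) x) - lap u x * lap α x)]
        have hD1 : (β x * f x)^2 ≤ Mβ^2*(f x)^2 := by
          have hβ2 : (β x)^2 ≤ Mβ^2 := sq_le_sq' (abs_le.1 (hβ x)).1 (abs_le.1 (hβ x)).2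
          have := mul_le_mul_of_nonneg_right hβ2 (sq_nonneg (f x))
          linarith only [this]
        have hD2 : (∑ i : Fin (n+1), pd i α x * pd i (lap u) x)^2
            ≤ dd*(Mα^2*∑ i : Fin (n+1), (pd i (lap u) x)^2) := by
          have hcs := sq_sum_le_card_mul_sum_sq (s := (Finset.univ : Finset (Fin (n+1))))
            (f := fun i => pd i α x * pd i (lap u) x)
          have hcard : ((Finset.univ : Finset (Fin (n+1))).card : ℝ) = dd := by
            rw [Finset.card_univ, Fintype.card_fin, hdd]; push_cast; ring
          rw [hcard] at hcs
          have hterm : ∀ i : Fin (n+1),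
              (pd i α x * pd i (lap u) x)^2 ≤ Mα^2*(pd i (lap u) x)^2 := by
            intro i
            have habs := abs_le.1 (abs_pd_le (hαW2 x).2.1 i)
            have hpda : (pd i α x)^2 ≤ Mα^2 := sq_le_sq' habs.1 habs.2
            have := mul_le_mul_of_nonneg_right hpda (sq_nonneg (pd i (lap u) x))
            linarith only [this]
          calc (∑ i : Fin (n+1), pd i α x * pd i (lap u) x)^2
              ≤ dd * ∑ i : Fin (n+1), (pd i α x * pd i (lap u) x)^2 := hcs
            _ ≤ dd * (Mα^2*∑ i : Fin (n+1), (pd i (lap u) x)^2) := by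
                apply mul_le_mul_of_nonneg_left _ (le_of_lt hdd0)
                rw [Finset.mul_sum]
                exact Finset.sum_le_sum (fun i _ => hterm i)
        have hD3 : (lap u x * lap α x)^2 ≤ (dd*Mα)^2*(lap u x)^2 := by
          have hla : |lap α x| ≤ dd*Mα := by
            have h5 := abs_lap_le (f := α) (x := x) (hαW2 x).2.2
            have h6 : ((n+1 : ℕ) : ℝ)*Mα = dd*Mα := by rw [hdd]; push_cast; ring
            rw [h6] at h5
            exact h5
          have hla2 : (lap α x)^2 ≤ (dd*Mα)^2 := sq_le_sq' (abs_le.1 hla).1 (abs_le.1 hla).2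
          have := mul_le_mul_of_nonneg_left hla2 (sq_nonneg (lap u x))
          linarith only [this]
        have h12 := mul_le_mul_of_nonneg_left hD2 (by norm_num : (0:ℝ) ≤ 12)
        linarith only [hA, hB, hC, hD1, h12, hD3]
      rw [integral_const_mul, ← hIg] at h1
      have hsplit : (∫ x in D, (3*Mβ^2*(f x)^2
            + 12*dd*Mα^2*(∑ i : Fin (n+1), (pd i (lap u) x)^2)
            + 3*(dd*Mα)^2*(lap u x)^2))
          = 3*Mβ^2*If + 12*dd*Mα^2*Iv' + 3*(dd*Mα)^2*Iv := by
        rw [integral_add (contIntegrableOn hDb ((continuous_const.fun_mul (hfc.fun_pow 2)).fun_add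
            (continuous_const.fun_mul
              (continuous_finset_sum _ (fun i _ => (hpdvc i).fun_pow 2)))))
          (contIntegrableOn hDb (continuous_const.fun_mul (hvc.fun_pow 2))),
          integral_add (contIntegrableOn hDb (continuous_const.fun_mul (hfc.fun_pow 2)))
            (contIntegrableOn hDb (continuous_const.fun_mul
              (continuous_finset_sum _ (fun i _ => (hpdvc i).fun_pow 2)))),
          integral_const_mul, integral_const_mul, integral_const_mul, ← hIf, ← hIv', ← hIv]
      rw [hsplit] at h1
      exact h1
    -- combine
    have hIvIf : Iv ≤ c3*If := by
      have h1 : αmin^2*Iv ≤ c2*If := le_trans hS4 hIwIf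
      have h2 : Iv ≤ (c2*If)/αmin^2 := by
        rw [le_div_iff₀ (by positivity)]
        linarith only [h1]
      calc Iv ≤ (c2*If)/αmin^2 := h2
        _ = c3*If := by rw [hc3]; ring
    have hIv'If : Iv' ≤ c4*If := by
      have h0 := mul_le_mul_of_nonneg_left hIvIf (show (0:ℝ) ≤ 2*dd*Mα^2 by positivity)
      have h1 : αmin^2*Iv' ≤ 2*(c1*If) + 2*dd*Mα^2*(c3*If) := by
        linarith only [hS5, hIw'If, h0]
      have h2 : Iv' ≤ (2*(c1*If) + 2*dd*Mα^2*(c3*If))/αmin^2 := by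
        rw [le_div_iff₀ (by positivity)]
        linarith only [h1]
      calc Iv' ≤ (2*(c1*If) + 2*dd*Mα^2*(c3*If))/αmin^2 := h2
        _ = c4*If := by rw [hc4]; ring
    have hIgIf : Ig ≤ c5*If := by
      have ha := mul_le_mul_of_nonneg_left hIv'If (show (0:ℝ) ≤ 12*dd*Mα^2 by positivity)
      have hb := mul_le_mul_of_nonneg_left hIvIf (show (0:ℝ) ≤ 3*(dd*Mα)^2 by positivity)
      have h1 : αmin^2*Ig ≤ 3*Mβ^2*If + 12*dd*Mα^2*(c4*If) + 3*(dd*Mα)^2*(c3*If) := by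
        linarith only [hS6, ha, hb]
      have h2 : Ig ≤ (3*Mβ^2*If + 12*dd*Mα^2*(c4*If) + 3*(dd*Mα)^2*(c3*If))/αmin^2 := by
        rw [le_div_iff₀ (by positivity)]
        linarith only [h1]
      calc Ig ≤ (3*Mβ^2*If + 12*dd*Mα^2*(c4*If) + 3*(dd*Mα)^2*(c3*If))/αmin^2 := h2
        _ = c5*If := by rw [hc5]; ring
    constructor
    · -- membership in L²
      haveI : IsFiniteMeasure (volume.restrict D) :=
        ⟨by rw [Measure.restrict_apply_univ]; exact hDb.measure_lt_top⟩
      obtain ⟨Cb, hCb⟩ := hDb.isCompact_closure.exists_bound_of_continuousOn hgc.continuousOn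
      apply MemLp.of_bound hgc.aestronglyMeasurable.restrict Cb
      exact (ae_restrict_iff' hDmeas).2
        (Filter.Eventually.of_forall (fun x hx => hCb x (subset_closure hx)))
    · -- the estimate
      have h1 : Real.sqrt Ig ≤ Real.sqrt (c5*If) := Real.sqrt_le_sqrt hIgIf
      have h2 : Real.sqrt (c5*If) = Real.sqrt c5 * Real.sqrt If := Real.sqrt_mul hc5n If
      have h3 : (0:ℝ) ≤ Real.sqrt If := Real.sqrt_nonneg _
      have h4 : (0:ℝ) ≤ Real.sqrt c5 := Real.sqrt_nonneg _
      linarith only [h1, h2, h3, h4]
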